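/- For every finite p-group G there exist a finite p-group H and an isoclinism (φ, θ) from G to H such that Z(H) ≤ H' (i.e., H is a stem group in the isoclinism class of G). -/

import Mathlib

open scoped Classical

namespace Paper

/-- The commutator `[x,y] = x⁻¹y⁻¹xy`. -/
def comm {G : Type*} [Group G] (x y : G) : G := x⁻¹ * y⁻¹ * x * y

/-- `K(G)`, the set of commutators in `G`. -/
def KG (G : Type*) [Group G] : Set G := {g : G | ∃ x y : G, comm x y = g}

/-- The fiber of `g` under the commutator word map. -/
def fiber {G : Type*} [Group G] (g : G) : Set (G × G) := {q : G × G | comm q.1 q.2 = g}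

/-- `Pr_g(G) = |fiber(g)| / |G|²`. -/
noncomputable def Pr (G : Type*) [Group G] (g : G) : ℚ :=
  (Nat.card (fiber g) : ℚ) / ((Nat.card G : ℚ)) ^ 2

/-- `P(G) = {Pr_g(G) : g ∈ K(G), g ≠ 1}`. -/
noncomputable def PSet (G : Type*) [Group G] : Set ℚ :=
  {q : ℚ | ∃ g ∈ KG G, g ≠ 1 ∧ Pr G g = q}

/-- The conjugacy class `g^G` of `g` in `G`. -/
def conjClass {G : Type*} [Group G] (g : G) : Set G := {h : G | ∃ x : G, x⁻¹ * g * x = h}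

/-- `G` is of conjugate type `(1, m)`: every noncentral element has conjugacy
class of size exactly `m`. -/
def IsConjugateType1 (G : Type*) [Group G] (m : ℕ) : Prop :=
  ∀ g : G, g ∉ Subgroup.center G → Nat.card (conjClass g) = m

/-- `TZ_g = {xZ(G) ∈ G/Z(G) : g ∈ [x,G]}`. -/
def TZ (G : Type*) [Group G] (g : G) : Set (G ⧸ Subgroup.center G) :=
  {xz : G ⧸ Subgroup.center G |
    ∃ x : G, (QuotientGroup.mk x : G ⧸ Subgroup.center G) = xz ∧ ∃ h : G, comm x h = g}


noncomputable def qhom (n : ℕ) : FreeGroup (Fin n) →* Multiplicative (Fin n →₀ ℤ) :=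
  FreeGroup.lift fun j => Multiplicative.ofAdd (Finsupp.single j 1)

lemma ker_qhom (n : ℕ) : (qhom n).ker = commutator (FreeGroup (Fin n)) := by
  apply le_antisymm
  · intro f hf
    let gAdd : (Fin n →₀ ℤ) →+ Additive (Abelianization (FreeGroup (Fin n))) :=
      Finsupp.liftAddHom fun j =>
        (zmultiplesHom _) (Additive.ofMul (Abelianization.of (FreeGroup.of j)))
    let g : Multiplicative (Fin n →₀ ℤ) →* Abelianization (FreeGroup (Fin n)) :=
      MonoidHom.mk' (fun a => Additive.toMul (gAdd (Multiplicative.toAdd a)))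
        (by intro a b; simp)
    have hcomp : g.comp (qhom n) = Abelianization.of := by
      apply FreeGroup.ext_hom; intro j
      simp only [MonoidHom.comp_apply, qhom, FreeGroup.lift_apply_of]
      show Additive.toMul (gAdd (Multiplicative.toAdd (Multiplicative.ofAdd (Finsupp.single j 1)))) = _
      simp [gAdd]
    have h1 : Abelianization.of f = 1 := by
      rw [← hcomp]
      have : qhom n f = 1 := hf
      simp [this]
    exact (QuotientGroup.eq_one_iff f).mp h1
  · exact Abelianization.commutator_subset_ker _


open scoped IsMulCommutative commutatorElement in
lemma key (n : ℕ) (N S : Subgroup (FreeGroup (Fin n))) [hN : N.Normal]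
    (hNS : N ≤ S) (hNq : N ≤ (qhom n).ker)
    (hFS : ⁅(⊤ : Subgroup (FreeGroup (Fin n))), S⁆ ≤ N) :
    ∃ T : Subgroup (FreeGroup (Fin n)), T.Normal ∧ N ≤ T ∧ T ≤ S ∧
      (∀ f ∈ T, f ∈ (qhom n).ker → f ∈ N) ∧
      (∀ s ∈ S, ∃ t ∈ T, s * t⁻¹ ∈ (qhom n).ker) := by
  classical
  set F := FreeGroup (Fin n)
  let μ : F →* (F ⧸ N) := QuotientGroup.mk' N
  have hμsurj : Function.Surjective μ := QuotientGroup.mk'_surjective N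
  have hcent : ∀ s ∈ S, μ s ∈ Subgroup.center (F ⧸ N) := by
    intro s hs
    rw [Subgroup.mem_center_iff]
    intro g
    obtain ⟨f, rfl⟩ := hμsurj g
    have h1 : ⁅μ f, μ s⁆ = 1 := by
      have : ⁅f, s⁆ ∈ N := hFS (Subgroup.commutator_mem_commutator (Subgroup.mem_top f) hs)
      have h2 : μ ⁅f, s⁆ = 1 := (QuotientGroup.eq_one_iff _).mpr this
      simpa [map_commutatorElement] using h2
    exact (commutatorElement_eq_one_iff_commute.mp h1).eq
  let qbar : (F ⧸ N) →* Multiplicative (Fin n →₀ ℤ) := QuotientGroup.lift N (qhom n) hNq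
  have hqbar : ∀ f : F, qbar (μ f) = qhom n f := fun f => rfl
  -- the image submodule
  let Wgrp : Subgroup (Multiplicative (Fin n →₀ ℤ)) := S.map (qhom n)
  let W : Submodule ℤ (Fin n →₀ ℤ) :=
    AddSubgroup.toIntSubmodule (Subgroup.toAddSubgroup' Wgrp)
  have hWmem : ∀ x : Fin n →₀ ℤ, x ∈ W ↔ Multiplicative.ofAdd x ∈ Wgrp := fun x => Iff.rfl
  obtain ⟨m, b⟩ := Submodule.basisOfPid (Finsupp.basisSingleOne (R := ℤ) (ι := Fin n)) W
  have hbmem : ∀ j : Fin m, ∃ s ∈ S, qhom n s = Multiplicative.ofAdd ((b j : Fin n →₀ ℤ)) := by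
    intro j
    have := (hWmem _).mp (b j).2
    simpa [Wgrp, Subgroup.mem_map] using this
  choose s hsS hsq using hbmem
  let Z1 := Subgroup.center (F ⧸ N)
  let c : Fin m → Z1 := fun j => ⟨μ (s j), hcent _ (hsS j)⟩
  let ψ : (Fin m →₀ ℤ) →+ Additive Z1 :=
    Finsupp.liftAddHom fun j => (zmultiplesHom _) (Additive.ofMul (c j))
  have hψsingle : ∀ (j : Fin m) (k : ℤ),
      ((Additive.toMul (ψ (Finsupp.single j k)) : Z1) : F ⧸ N) = μ (s j) ^ k := by
    intro j k
    simp only [ψ, Finsupp.liftAddHom_apply_single, zmultiplesHom_apply, toMul_zsmul, toMul_ofMul]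
    push_cast
    rfl
  let K : Subgroup (F ⧸ N) := Subgroup.closure (Set.range fun j => μ (s j))
  have hKmem1 : ∀ a : Fin m →₀ ℤ, ((Additive.toMul (ψ a) : Z1) : F ⧸ N) ∈ K := by
    intro a
    induction a using Finsupp.induction with
    | zero => simpa using K.one_mem
    | single_add j k f _ _ ih =>
      rw [map_add]
      have : (Additive.toMul (ψ (Finsupp.single j k) + ψ f) : Z1)
          = Additive.toMul (ψ (Finsupp.single j k)) * Additive.toMul (ψ f) := rfl
      rw [this]
      push_cast
      exact K.mul_mem (by rw [hψsingle]; exact K.zpow_mem (Subgroup.subset_closure ⟨j, rfl⟩) k) ih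
  have hKmem2 : ∀ x ∈ K, ∃ a : Fin m →₀ ℤ, x = ((Additive.toMul (ψ a) : Z1) : F ⧸ N) := by
    intro x hx
    induction hx using Subgroup.closure_induction with
    | mem x hx =>
      obtain ⟨j, rfl⟩ := hx
      exact ⟨Finsupp.single j 1, by rw [hψsingle]; simp⟩
    | one => exact ⟨0, by simp [map_zero]⟩
    | mul x y hx hy ihx ihy =>
      obtain ⟨a, rfl⟩ := ihx
      obtain ⟨a', rfl⟩ := ihy
      exact ⟨a + a', by rw [map_add]; rfl⟩
    | inv x hx ihx =>
      obtain ⟨a, rfl⟩ := ihx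
      exact ⟨-a, by rw [map_neg]; rfl⟩
  have hKcent : K ≤ Subgroup.center (F ⧸ N) := by
    rw [Subgroup.closure_le]
    rintro x ⟨j, rfl⟩
    exact hcent _ (hsS j)
  have hKnormal : K.Normal := by
    constructor
    intro x hx g
    have := Subgroup.mem_center_iff.mp (hKcent hx) g
    rw [this, mul_assoc, mul_inv_cancel, mul_one]
    exact hx
  let ε : Additive Z1 →+ (Fin n →₀ ℤ) :=
      AddMonoidHom.mk' (fun z => Multiplicative.toAdd (qbar ((Additive.toMul z : Z1) : F ⧸ N)))
        (by intro x y; show Multiplicative.toAdd (qbar (((Additive.toMul x : Z1) : F ⧸ N) * _)) = _;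
            rw [map_mul]; rfl)
  let Θ : (Fin m →₀ ℤ) →+ (Fin n →₀ ℤ) := ε.comp ψ
  let Θ' : (Fin m →₀ ℤ) →+ (Fin n →₀ ℤ) :=
      (W.subtype.comp (b.repr.symm : (Fin m →₀ ℤ) →ₗ[ℤ] W)).toAddMonoidHom
  have hΘ : Θ = Θ' := by
      apply Finsupp.addHom_ext
      intro j k
      show ε (ψ (Finsupp.single j k)) = W.subtype (b.repr.symm (Finsupp.single j k))
      rw [Module.Basis.repr_symm_single]
      have h1 : ε (ψ (Finsupp.single j k)) = Multiplicative.toAdd (qbar (μ (s j) ^ k)) := by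
        show Multiplicative.toAdd (qbar ((Additive.toMul (ψ (Finsupp.single j k)) : Z1) : F ⧸ N)) = _
        rw [hψsingle]
      rw [h1, map_zpow, hqbar, hsq]
      simp
  refine ⟨K.comap μ, hKnormal.comap μ, ?_, ?_, ?_, ?_⟩
  · intro f hf
    have : μ f = 1 := (QuotientGroup.eq_one_iff _).mpr hf
    simp [Subgroup.mem_comap, this, K.one_mem]
  · -- T ≤ S
    have hKS : K ≤ S.map μ := by
      rw [Subgroup.closure_le]
      rintro x ⟨j, rfl⟩
      exact ⟨s j, hsS j, rfl⟩
    intro f hf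
    have : f ∈ Subgroup.comap μ (S.map μ) := hKS hf
    rw [Subgroup.comap_map_eq] at this
    have hker : μ.ker = N := QuotientGroup.ker_mk' N
    rw [hker, sup_eq_left.mpr hNS] at this
    exact this
  · -- T ⊓ ker q ≤ N
    intro f hf hfq
    obtain ⟨a, ha⟩ := hKmem2 _ hf
    -- build Θ and show a = 0
    have haΘ : Θ a = 0 := by
      show ε (ψ a) = 0
      have h2 : qbar ((Additive.toMul (ψ a) : Z1) : F ⧸ N) = 1 := by
        rw [← ha, hqbar]; exact hfq
      show Multiplicative.toAdd (qbar ((Additive.toMul (ψ a) : Z1) : F ⧸ N)) = 0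
      rw [h2]; rfl
    have ha0 : a = 0 := by
      rw [hΘ] at haΘ
      have h3 : (b.repr.symm a : Fin n →₀ ℤ) = 0 := haΘ
      have h4 : b.repr.symm a = 0 := by exact_mod_cast Submodule.coe_eq_zero.mp h3
      exact (LinearEquiv.map_eq_zero_iff _).mp h4
    subst ha0
    have : μ f = 1 := by rw [ha, map_zero]; rfl
    exact (QuotientGroup.eq_one_iff _).mp this
  · -- S ≤ (ker q) * T
    intro x hx
    have hw : Multiplicative.toAdd (qhom n x) ∈ W := by
      rw [hWmem]
      exact ⟨x, hx, rfl⟩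
    set a : Fin m →₀ ℤ := b.repr ⟨Multiplicative.toAdd (qhom n x), hw⟩ with ha
    obtain ⟨t, ht⟩ := hμsurj ((Additive.toMul (ψ a) : Z1) : F ⧸ N)
    refine ⟨t, by simpa [Subgroup.mem_comap, ht] using hKmem1 a, ?_⟩
    have hqt : qhom n t = qhom n x := by
      have h1 : qbar (μ t) = qbar ((Additive.toMul (ψ a) : Z1) : F ⧸ N) := by rw [ht]
      rw [hqbar] at h1
      rw [h1]
      -- qbar (toMul (ψ a)) = ε-value
      have h2 : Multiplicative.toAdd (qbar ((Additive.toMul (ψ a) : Z1) : F ⧸ N))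
          = W.subtype (b.repr.symm a) := by
        have := congrArg (fun (Φ : (Fin m →₀ ℤ) →+ (Fin n →₀ ℤ)) => Φ a) hΘ
        exact this
      have h3 : W.subtype (b.repr.symm a) = Multiplicative.toAdd (qhom n x) := by
        rw [ha, LinearEquiv.symm_apply_apply]
        rfl
      apply_fun Multiplicative.toAdd
      rw [h2, h3]
    rw [MonoidHom.mem_ker, map_mul, map_inv, hqt, mul_inv_cancel]


lemma comm_center_left {H : Type*} [Group H] (u v z : H)
    (hz : z ∈ Subgroup.center H) : comm (u * z) v = comm u v := by
  have hz' : ∀ g : H, g * z = z * g := fun g => Subgroup.mem_center_iff.mp hz g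
  simp only [comm, mul_inv_rev]
  have h1 : z⁻¹ * u⁻¹ * v⁻¹ * (u * z) * v = z⁻¹ * ((u⁻¹ * v⁻¹ * u) * z) * v := by
    simp [mul_assoc]
  rw [h1, hz' (u⁻¹ * v⁻¹ * u), inv_mul_cancel_left]

lemma comm_center_right {H : Type*} [Group H] (u v w : H)
    (hw : w ∈ Subgroup.center H) : comm u (v * w) = comm u v := by
  have hw' : ∀ g : H, g * w = w * g := fun g => Subgroup.mem_center_iff.mp hw g
  simp only [comm, mul_inv_rev]
  have h1 : u⁻¹ * (w⁻¹ * v⁻¹) * u * (v * w) = (u⁻¹ * w⁻¹) * (v⁻¹ * u * v) * w := by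
    simp [mul_assoc]
  rw [h1]
  have h2 : u⁻¹ * w⁻¹ * (v⁻¹ * u * v) * w = u⁻¹ * (w⁻¹ * ((v⁻¹ * u * v) * w)) := by
    simp [mul_assoc]
  rw [h2, hw' (v⁻¹ * u * v), inv_mul_cancel_left]
  simp [mul_assoc]


open scoped commutatorElement in
lemma comm_mem_commutator {G : Type*} [Group G] (x y : G) : comm x y ∈ commutator G := by
  have h : comm x y = ⁅x⁻¹, y⁻¹⁆ := by
    simp only [comm, commutatorElement_def, inv_inv]
  rw [h, commutator_def]
  exact Subgroup.commutator_mem_commutator (Subgroup.mem_top _) (Subgroup.mem_top _)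


open scoped commutatorElement in
/-- every finite `p`-group is isoclinic to a stem group, i.e. a
finite `p`-group `H` with `Z(H) ≤ H'`. -/
theorem stmt2 (p : ℕ) (hp : p.Prime) (G : Type*) [Group G] [Finite G]
    (hG : IsPGroup p G) :
    ∃ (H : Type) (_ : Group H) (_ : Finite H),
      IsPGroup p H ∧
      (∃ (φ : (G ⧸ Subgroup.center G) ≃* (H ⧸ Subgroup.center H))
         (θ : (commutator G) ≃* (commutator H)),
        (∀ (x y : G) (x' y' : H),
          φ (QuotientGroup.mk x) = QuotientGroup.mk x' →
          φ (QuotientGroup.mk y) = QuotientGroup.mk y' →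
          ((θ ⟨comm x y, comm_mem_commutator x y⟩ : commutator H) : H) = comm x' y')) ∧
      Subgroup.center H ≤ commutator H := by
  classical
  set n := Nat.card G with hn
  let e : G ≃ Fin n := Finite.equivFin G
  set F := FreeGroup (Fin n) with hF
  let π : F →* G := FreeGroup.lift fun i => e.symm i
  have hπ : Function.Surjective π := by
    intro g
    exact ⟨FreeGroup.of (e g), by rw [show π (FreeGroup.of (e g)) = e.symm (e g) from FreeGroup.lift_apply_of]; exact e.symm_apply_apply g⟩
  set SS : Subgroup F := (Subgroup.center G).comap π with hSSdef
  set NN : Subgroup F := commutator F ⊓ π.ker with hNNdef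
  haveI hNNnormal : NN.Normal := by
    constructor
    intro x hx g
    exact ⟨(commutator F).normal_of_characteristic.conj_mem x hx.1 g,
           π.normal_ker.conj_mem x hx.2 g⟩
  have hNS : NN ≤ SS := by
    intro f hf
    have : π f = 1 := hf.2
    simp [hSSdef, Subgroup.mem_comap, this, Subgroup.one_mem]
  have hNq : NN ≤ (qhom n).ker := by rw [ker_qhom]; exact inf_le_left
  have hFS : ⁅(⊤ : Subgroup F), SS⁆ ≤ NN := by
    apply le_inf
    · exact le_trans (Subgroup.commutator_mono le_top le_top) (le_of_eq (commutator_def F).symm)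
    · rw [Subgroup.commutator_le]
      intro g1 _ g2 hg2
      rw [MonoidHom.mem_ker, map_commutatorElement]
      exact commutatorElement_eq_one_iff_commute.mpr
        (Subgroup.mem_center_iff.mp hg2 (π g1))
  obtain ⟨T, hTnorm, hNT, hTS, hTq, hSq⟩ := key n NN SS hNS hNq hFS
  haveI := hTnorm
  have hTq' : ∀ f ∈ T, f ∈ commutator F → f ∈ NN := by
    intro f h1 h2; exact hTq f h1 (by rw [ker_qhom]; exact h2)
  have hSq' : ∀ s ∈ SS, ∃ t ∈ T, s * t⁻¹ ∈ commutator F := by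
    intro s hs; obtain ⟨t, ht1, ht2⟩ := hSq s hs
    exact ⟨t, ht1, by rw [← ker_qhom]; exact ht2⟩
  set H := F ⧸ T with hH
  let ρ : F →* H := QuotientGroup.mk' T
  have hρ : Function.Surjective ρ := QuotientGroup.mk'_surjective T
  have hkerρ : ρ.ker = T := QuotientGroup.ker_mk' T
  -- center of H
  have hcenterH : Subgroup.center H = SS.map ρ := by
    apply le_antisymm
    · intro h hh
      obtain ⟨f, rfl⟩ := hρ h
      have hfS : f ∈ SS := by
        have : π f ∈ Subgroup.center G := by
          rw [Subgroup.mem_center_iff]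
          intro g
          obtain ⟨x, rfl⟩ := hπ g
          have h1 : ρ ⁅x, f⁆ = 1 := by
            rw [map_commutatorElement]
            exact commutatorElement_eq_one_iff_commute.mpr
              (Subgroup.mem_center_iff.mp hh (ρ x))
          have h2 : ⁅x, f⁆ ∈ T := by rw [← hkerρ]; exact h1
          have h3 : ⁅x, f⁆ ∈ commutator F :=
            Subgroup.commutator_mem_commutator (Subgroup.mem_top _) (Subgroup.mem_top _)
          have h4 : ⁅x, f⁆ ∈ NN := hTq' _ h2 h3
          have h5 : π ⁅x, f⁆ = 1 := h4.2
          rw [map_commutatorElement] at h5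
          exact (commutatorElement_eq_one_iff_commute.mp h5).eq
        exact this
      exact ⟨f, hfS, rfl⟩
    · rintro _ ⟨f, hfS, rfl⟩
      rw [Subgroup.mem_center_iff]
      intro g
      obtain ⟨x, rfl⟩ := hρ g
      have h1 : ⁅x, f⁆ ∈ T := hNT (hFS (Subgroup.commutator_mem_commutator (Subgroup.mem_top x) hfS))
      have h2 : ρ ⁅x, f⁆ = 1 := by rw [← hkerρ] at h1; exact h1
      rw [map_commutatorElement] at h2
      exact (commutatorElement_eq_one_iff_commute.mp h2).eq
  have hcommH : commutator H = (commutator F).map ρ := by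
    rw [commutator_def, ← Subgroup.map_top_of_surjective ρ hρ, ← Subgroup.map_commutator,
      ← commutator_def]
  have hZle : Subgroup.center H ≤ commutator H := by
    rw [hcenterH, hcommH]
    rintro _ ⟨f, hfS, rfl⟩
    obtain ⟨t, htT, hft⟩ := hSq' f hfS
    refine ⟨f * t⁻¹, hft, ?_⟩
    have : ρ t = 1 := by rw [← hkerρ] at htT; exact htT
    rw [map_mul, map_inv, this, inv_one, mul_one]
  -- φ
  let a : F →* G ⧸ Subgroup.center G := (QuotientGroup.mk' (Subgroup.center G)).comp π
  let b : F →* H ⧸ Subgroup.center H := (QuotientGroup.mk' (Subgroup.center H)).comp ρ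
  have ha_surj : Function.Surjective a :=
    (QuotientGroup.mk'_surjective _).comp hπ
  have hb_surj : Function.Surjective b :=
    (QuotientGroup.mk'_surjective _).comp hρ
  have haker : a.ker = SS := by
    show ((QuotientGroup.mk' (Subgroup.center G)).comp π).ker = SS
    rw [← MonoidHom.comap_ker, QuotientGroup.ker_mk']
  have hbker : b.ker = SS := by
    show ((QuotientGroup.mk' (Subgroup.center H)).comp ρ).ker = SS
    rw [← MonoidHom.comap_ker, QuotientGroup.ker_mk', hcenterH, Subgroup.comap_map_eq, hkerρ,
      sup_eq_left.mpr hTS]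
  have hab : a.ker = b.ker := by rw [haker, hbker]
  let ea : (F ⧸ a.ker) ≃* (G ⧸ Subgroup.center G) :=
    QuotientGroup.quotientKerEquivOfSurjective a ha_surj
  let eb : (F ⧸ b.ker) ≃* (H ⧸ Subgroup.center H) :=
    QuotientGroup.quotientKerEquivOfSurjective b hb_surj
  let φ : (G ⧸ Subgroup.center G) ≃* (H ⧸ Subgroup.center H) :=
    ea.symm.trans ((QuotientGroup.quotientMulEquivOfEq hab).trans eb)
  have hφ : ∀ f : F, φ (QuotientGroup.mk (π f)) = QuotientGroup.mk (ρ f) := by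
    intro f
    have h1 : ea (QuotientGroup.mk f) = QuotientGroup.mk (π f) := rfl
    have h2 : ea.symm (QuotientGroup.mk (π f)) = QuotientGroup.mk f := by
      rw [← h1, MulEquiv.symm_apply_apply]
    show (QuotientGroup.quotientMulEquivOfEq hab).trans eb (ea.symm (QuotientGroup.mk (π f)))
        = QuotientGroup.mk (ρ f)
    rw [h2]
    rfl
  -- θ
  let α : (commutator F) →* G := π.comp (commutator F).subtype
  let β : (commutator F) →* H := ρ.comp (commutator F).subtype
  have hαβ : α.ker = β.ker := by
    ext c
    simp only [MonoidHom.mem_ker, MonoidHom.comp_apply]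
    constructor
    · intro hc
      have h1 : (c : F) ∈ NN := ⟨c.2, hc⟩
      have h2 : (c : F) ∈ T := hNT h1
      rw [← hkerρ] at h2; exact h2
    · intro hc
      have h1 : (c : F) ∈ T := by rw [← hkerρ]; exact hc
      have h2 : (c : F) ∈ NN := hTq' _ h1 c.2
      exact h2.2
  have hαrange : α.range = commutator G := by
    show (π.comp (commutator F).subtype).range = commutator G
    rw [MonoidHom.range_comp, Subgroup.range_subtype, commutator_def G,
      ← Subgroup.map_top_of_surjective π hπ, ← Subgroup.map_commutator, ← commutator_def]
  have hβrange : β.range = commutator H := by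
    show (ρ.comp (commutator F).subtype).range = commutator H
    rw [MonoidHom.range_comp, Subgroup.range_subtype, hcommH]
  let θ : (commutator G) ≃* (commutator H) :=
    ((MulEquiv.subgroupCongr hαrange).symm.trans
      ((QuotientGroup.quotientKerEquivRange α).symm.trans
        ((QuotientGroup.quotientMulEquivOfEq hαβ).trans
          ((QuotientGroup.quotientKerEquivRange β).trans (MulEquiv.subgroupCongr hβrange)))))
  have hθ : ∀ (c : F) (hc : c ∈ commutator F) (hmem : π c ∈ commutator G),
      ((θ ⟨π c, hmem⟩ : commutator H) : H) = ρ c := by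
    intro c hc hmem
    have h0 : (MulEquiv.subgroupCongr hαrange).symm ⟨π c, hmem⟩
        = (⟨π c, hαrange ▸ hmem⟩ : α.range) := rfl
    have h1 : (QuotientGroup.quotientKerEquivRange α) (QuotientGroup.mk (⟨c, hc⟩ : commutator F))
        = ⟨π c, hαrange ▸ hmem⟩ := by
      apply Subtype.ext
      rfl
    have h2 : (QuotientGroup.quotientKerEquivRange α).symm (⟨π c, hαrange ▸ hmem⟩ : α.range)
        = QuotientGroup.mk (⟨c, hc⟩ : commutator F) := by
      rw [← h1, MulEquiv.symm_apply_apply]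
    show (((QuotientGroup.quotientMulEquivOfEq hαβ).trans
          ((QuotientGroup.quotientKerEquivRange β).trans (MulEquiv.subgroupCongr hβrange)))
        ((QuotientGroup.quotientKerEquivRange α).symm
          ((MulEquiv.subgroupCongr hαrange).symm ⟨π c, hmem⟩)) : H) = ρ c
    rw [h0, h2]
    rfl
  -- finiteness of H
  haveI hfinCommH : Finite ↥(commutator H) := Finite.of_equiv _ θ.toEquiv
  haveI hfinZH : Finite ↥(Subgroup.center H) :=
    Finite.of_injective (Subgroup.inclusion hZle) (Subgroup.inclusion_injective hZle)
  let abar : H →* G ⧸ Subgroup.center G :=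
    QuotientGroup.lift T a (by rw [← haker] at hTS; exact hTS)
  have habar : ∀ f : F, abar (ρ f) = a f := fun f => rfl
  have habar_surj : Function.Surjective abar := by
    intro x
    obtain ⟨f, hf⟩ := ha_surj x
    exact ⟨ρ f, by rw [habar, hf]⟩
  have hkerabar : abar.ker = Subgroup.center H := by
    ext h
    obtain ⟨f, rfl⟩ := hρ h
    rw [MonoidHom.mem_ker, habar]
    constructor
    · intro h1
      have h2 : f ∈ SS := by rw [← haker]; exact h1
      rw [hcenterH]
      exact ⟨f, h2, rfl⟩
    · intro h1
      rw [hcenterH] at h1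
      have h2 : f ∈ Subgroup.comap ρ (SS.map ρ) := h1
      rw [Subgroup.comap_map_eq, hkerρ, sup_eq_left.mpr hTS] at h2
      have h3 : f ∈ a.ker := by rw [haker]; exact h2
      exact h3
  have eH : (H ⧸ Subgroup.center H) ≃* (G ⧸ Subgroup.center G) :=
    (QuotientGroup.quotientMulEquivOfEq hkerabar.symm).trans
      (QuotientGroup.quotientKerEquivOfSurjective abar habar_surj)
  haveI : Finite (H ⧸ Subgroup.center H) := Finite.of_equiv _ eH.symm.toEquiv
  haveI hfinH : Finite H :=
    Finite.of_equiv _ (Subgroup.groupEquivQuotientProdSubgroup (s := Subgroup.center H)).symm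
  haveI : Fact p.Prime := ⟨hp⟩
  have hPH : IsPGroup p H := by
    rw [IsPGroup.iff_card]
    have hq1 : ∃ k1, Nat.card (H ⧸ Subgroup.center H) = p ^ k1 := by
      have h3 := hG.to_quotient (Subgroup.center G)
      rw [IsPGroup.iff_card] at h3
      obtain ⟨k, hk⟩ := h3
      exact ⟨k, by rw [Nat.card_congr eH.toEquiv, hk]⟩
    have hPcommH : IsPGroup p ↥(commutator H) := by
      have hPcommG : IsPGroup p ↥(commutator G) := hG.to_subgroup _
      intro h
      obtain ⟨k, hk⟩ := hPcommG (θ.symm h)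
      exact ⟨k, by apply θ.symm.injective; rw [map_pow, hk, map_one]⟩
    have hq2 : ∃ k2, Nat.card ↥(Subgroup.center H) = p ^ k2 := by
      have h4 := hPcommH.to_le hZle
      rw [IsPGroup.iff_card] at h4
      exact h4
    obtain ⟨k1, hk1⟩ := hq1
    obtain ⟨k2, hk2⟩ := hq2
    exact ⟨k1 + k2, by
      rw [Subgroup.card_eq_card_quotient_mul_card_subgroup (Subgroup.center H), hk1, hk2,
        pow_add]⟩
  refine ⟨H, inferInstance, inferInstance, hPH, ⟨φ, θ, ?_⟩, hZle⟩
  intro x y x' y' hx hy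
  obtain ⟨f, rfl⟩ := hπ x
  obtain ⟨g, rfl⟩ := hπ y
  rw [hφ f] at hx
  rw [hφ g] at hy
  have hzx : (ρ f)⁻¹ * x' ∈ Subgroup.center H := QuotientGroup.eq.mp hx
  have hzy : (ρ g)⁻¹ * y' ∈ Subgroup.center H := QuotientGroup.eq.mp hy
  have hx' : x' = ρ f * ((ρ f)⁻¹ * x') := by rw [mul_inv_cancel_left]
  have hy' : y' = ρ g * ((ρ g)⁻¹ * y') := by rw [mul_inv_cancel_left]
  have hc : comm (π f) (π g) = π (comm f g) := by simp [comm, map_mul, map_inv]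
  have hmem : π (comm f g) ∈ commutator G := hc ▸ comm_mem_commutator (π f) (π g)
  have harg : (⟨comm (π f) (π g), comm_mem_commutator _ _⟩ : commutator G)
      = ⟨π (comm f g), hmem⟩ := Subtype.ext hc
  rw [harg, hθ (comm f g) (comm_mem_commutator f g) hmem]
  have hρc : ρ (comm f g) = comm (ρ f) (ρ g) := by simp [comm, map_mul, map_inv]
  rw [hρc, hx', hy', comm_center_left _ _ _ hzx, comm_center_right _ _ _ hzy]



end Paper
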